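/- arXiv:2410.03387 — 3 statements merged into one kernel-verified Lean document; each statement's English description precedes it below -/
import Mathlib

section
/- Let Ω ⊆ ℝ be finite, and let γ_1,...,γ_{a+1} be phantoms in Ω ∪ Ω²_C (pairs of contiguous elements of Ω ordered between their endpoints by ≤*), with at least one phantom equal to min Ω or the pair containing min Ω, and at least one equal to max Ω or the pair containing max Ω. Then every interior element of Ω (an element of Ω that is neither min Ω nor max Ω) is attained as the mixed median med(p, γ) for some vector of peaks p ∈ Ω^a. -/
/-- The ambient linearly ordered set `Ω ∪ Ω²_C`: singles `x` are encoded as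
`toLex (x, x)` and contiguous pairs `(x, y)` as `toLex (x, y)`; the lexicographic
order on `ℝ × ℝ` then restricts to the order `≤*`. -/
abbrev V : Type := Lex (ℝ × ℝ)

/-- Embedding of a single alternative into `Ω ∪ Ω²_C`. -/
def emb (x : ℝ) : V := toLex (x, x)

/-- A pair of contiguous alternatives as an element of `Ω ∪ Ω²_C`. -/
def pairV (x y : ℝ) : V := toLex (x, y)

/-- `(x, y)` is a pair of contiguous elements of `Ω`, i.e. `(x, y) ∈ Ω²_C`. -/
def IsContigPair (Ω : Finset ℝ) (x y : ℝ) : Prop :=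
  x ∈ Ω ∧ y ∈ Ω ∧ x < y ∧ ∀ z ∈ Ω, ¬(x < z ∧ z < y)

/-- `v` belongs to `Ω ∪ Ω²_C`. -/
def InDom (Ω : Finset ℝ) (v : V) : Prop :=
  (∃ z ∈ Ω, v = emb z) ∨ ∃ x y : ℝ, IsContigPair Ω x y ∧ v = pairV x y

/-- `m` is a median of the list `l` in a linear order. -/
def IsMedian {α : Type*} [LinearOrder α] (l : List α) (m : α) : Prop :=
  m ∈ l ∧ (l.length + 1) / 2 ≤ l.countP (fun b => decide (b ≤ m)) ∧
    (l.length + 1) / 2 ≤ l.countP (fun b => decide (m ≤ b))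

/-- With a phantom at (or at the pair containing) `min Ω` and one at (or at the
pair containing) `max Ω`, every interior element of `Ω` is attained as the mixed
median for some vector of peaks in `Ω`. -/
theorem stmt9 (Ω : Finset ℝ) (hne : Ω.Nonempty) (a : ℕ) (γ : Fin (a + 1) → V)
    (hdom : ∀ j, InDom Ω (γ j))
    (hmin : ∃ j, γ j = emb (Ω.min' hne) ∨
      ∃ y : ℝ, IsContigPair Ω (Ω.min' hne) y ∧ γ j = pairV (Ω.min' hne) y)
    (hmax : ∃ j, γ j = emb (Ω.max' hne) ∨
      ∃ x : ℝ, IsContigPair Ω x (Ω.max' hne) ∧ γ j = pairV x (Ω.max' hne))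
    (z : ℝ) (hz : z ∈ Ω) (hz1 : z ≠ Ω.min' hne) (hz2 : z ≠ Ω.max' hne) :
    ∃ p : Fin a → ℝ, (∀ i, p i ∈ Ω) ∧
      IsMedian ((List.ofFn fun i => emb (p i)) ++ List.ofFn γ) (emb z) := by
  have hzmin : Ω.min' hne < z := lt_of_le_of_ne (Ω.min'_le z hz) (Ne.symm hz1)
  have hzmax : z < Ω.max' hne := lt_of_le_of_ne (Ω.le_max' z hz) hz2
  obtain ⟨j1, h1⟩ := hmin
  obtain ⟨j2, h2⟩ := hmax
  -- phantom below and above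
  have hγ1 : γ j1 ≤ emb z := by
    rcases h1 with h | ⟨y, hc, h⟩ <;> rw [h] <;>
      exact Prod.Lex.le_iff.mpr (Or.inl hzmin)
  have hγ2 : emb z ≤ γ j2 := by
    rcases h2 with h | ⟨x, hc, h⟩
    · rw [h]; exact Prod.Lex.le_iff.mpr (Or.inl hzmax)
    · rw [h]
      have hx : z ≤ x := by
        by_contra hlt
        exact hc.2.2.2 z hz ⟨lt_of_not_ge hlt, hzmax⟩
      rcases lt_or_eq_of_le hx with h' | h'
      · exact Prod.Lex.le_iff.mpr (Or.inl h')
      · exact Prod.Lex.le_iff.mpr (Or.inr ⟨h', le_of_lt (h' ▸ hzmax)⟩)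
  cases a with
  | zero =>
    exfalso
    have hj : j1 = j2 := Fin.ext (by omega)
    rw [hj] at h1
    rcases h1 with h1 | ⟨y, hcy, h1⟩ <;> rcases h2 with h2 | ⟨x, hcx, h2⟩ <;>
        rw [h1] at h2 <;>
        simp only [emb, pairV, toLex_inj, Prod.mk.injEq] at h2
    · exact absurd (h2.1 ▸ hzmin : Ω.max' hne < z) (not_lt.mpr (le_of_lt hzmax))
    · exact absurd (h2.2 ▸ hzmin : Ω.max' hne < z) (not_lt.mpr (le_of_lt hzmax))
    · exact absurd (h2.1 ▸ hzmin : Ω.max' hne < z) (not_lt.mpr (le_of_lt hzmax))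
    · exact hcy.2.2.2 z hz ⟨hzmin, h2.2 ▸ hzmax⟩
  | succ n =>
    refine ⟨fun _ => z, fun _ => hz, ?_, ?_, ?_⟩
    · exact List.mem_append.mpr (Or.inl (List.mem_ofFn.mpr ⟨0, rfl⟩))
    · rw [List.countP_append]
      have hp : (List.ofFn fun _ : Fin (n+1) => emb z).countP
          (fun b => decide (b ≤ emb z)) = n + 1 := by
        rw [List.countP_eq_length.mpr]
        · simp
        · intro b hb
          rw [List.mem_ofFn] at hb
          obtain ⟨i, rfl⟩ := hb
          simp
      have hq : 0 < (List.ofFn γ).countP (fun b => decide (b ≤ emb z)) :=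
        List.countP_pos_iff.mpr ⟨γ j1, List.mem_ofFn.mpr ⟨j1, rfl⟩, by simpa using hγ1⟩
      simp only [List.length_append, List.length_ofFn]
      omega
    · rw [List.countP_append]
      have hp : (List.ofFn fun _ : Fin (n+1) => emb z).countP
          (fun b => decide (emb z ≤ b)) = n + 1 := by
        rw [List.countP_eq_length.mpr]
        · simp
        · intro b hb
          rw [List.mem_ofFn] at hb
          obtain ⟨i, rfl⟩ := hb
          simp
      have hq : 0 < (List.ofFn γ).countP (fun b => decide (emb z ≤ b)) :=
        List.countP_pos_iff.mpr ⟨γ j2, List.mem_ofFn.mpr ⟨j2, rfl⟩, by simpa using hγ2⟩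
      simp only [List.length_append, List.length_ofFn]
      omega
end

section
/- With phantoms as in the mixed median: a pair (x,y) ∈ Ω²_C can be the outcome of the mixed median for some peak vector p ∈ Ω^a if and only if at least one phantom equals (x,y). -/
lemma countP_ofFn' {α : Type*} {n : ℕ} (f : Fin n → α) (q : α → Bool) :
    (List.ofFn f).countP q = (Finset.univ.filter (fun i => q (f i))).card := by
  rw [List.ofFn_eq_map, List.countP_map, Fin.univ_def]
  simp [Finset.filter, Finset.card, Multiset.filter_coe, List.countP_eq_length_filter]
  rfl

lemma card_filter_lt_fin (n G : ℕ) (h : G ≤ n) :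
    ((Finset.univ : Finset (Fin n)).filter (fun i : Fin n => (i:ℕ) < G)).card = G := by
  have : ((Finset.univ : Finset (Fin n)).filter (fun i : Fin n => (i:ℕ) < G))
      = (Finset.range G).attachFin (fun m hm => lt_of_lt_of_le (Finset.mem_range.mp hm) h) := by
    ext i; simp [Fin.ext_iff]
  rw [this, Finset.card_attachFin, Finset.card_range]

/-- A pair `(x, y) ∈ Ω²_C` is the outcome of the mixed median for some peak
vector in `Ω` if and only if at least one phantom equals `(x, y)`. -/
theorem stmt10 (Ω : Finset ℝ) (a : ℕ) (γ : Fin (a + 1) → V)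
    (hdom : ∀ j, InDom Ω (γ j))
    (x y : ℝ) (hxy : IsContigPair Ω x y) :
    (∃ p : Fin a → ℝ, (∀ i, p i ∈ Ω) ∧
        IsMedian ((List.ofFn fun i => emb (p i)) ++ List.ofFn γ) (pairV x y)) ↔
      ∃ j, γ j = pairV x y := by
  obtain ⟨hxΩ, hyΩ, hlt, _⟩ := hxy
  set m : V := pairV x y with hm
  have hne : ∀ z : ℝ, emb z ≠ m := by
    intro z hz
    have : (z, z) = (x, y) := toLex.injective hz
    have h1 : z = x := congrArg Prod.fst this
    have h2 : z = y := congrArg Prod.snd this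
    exact absurd hlt (by rw [← h1, ← h2]; exact lt_irrefl z)
  constructor
  · rintro ⟨p, hp, hmem, -, -⟩
    rcases List.mem_append.mp hmem with h | h
    · obtain ⟨i, hi⟩ := List.mem_ofFn.mp h
      exact absurd hi (hne (p i))
    · obtain ⟨j, hj⟩ := List.mem_ofFn.mp h
      exact ⟨j, hj⟩
  · rintro ⟨j0, hj0⟩
    -- order facts
    have hxm : emb x ≤ m := by
      rw [hm, emb, pairV, Prod.Lex.le_iff]; exact Or.inr ⟨rfl, hlt.le⟩
    have hmx : ¬ (m ≤ emb x) := not_le.mpr (by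
      rw [hm, emb, pairV, Prod.Lex.lt_iff]; exact Or.inr ⟨rfl, hlt⟩)
    have hmy : m ≤ emb y := by
      rw [hm, emb, pairV, Prod.Lex.le_iff]; exact Or.inl hlt
    have hym : ¬ (emb y ≤ m) := not_le.mpr (by
      rw [hm, emb, pairV, Prod.Lex.lt_iff]; exact Or.inl hlt)
    set S : Finset (Fin (a + 1)) := Finset.univ.filter (fun j => ¬ (γ j ≤ m)) with hS
    set G := S.card with hG
    have hj0S : j0 ∉ S := by simp [hS, hj0]
    have hGa : G ≤ a := by
      have : G < Finset.univ.card :=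
        Finset.card_lt_card ⟨Finset.subset_univ S,
          fun h => hj0S (h (Finset.mem_univ j0))⟩
      simpa using Nat.lt_succ_iff.mp (by simpa using this)
    refine ⟨fun i => if (i : ℕ) < G then x else y, ?_, ?_, ?_, ?_⟩
    · intro i; dsimp only; split <;> assumption
    · exact List.mem_append.mpr (Or.inr (List.mem_ofFn.mpr ⟨j0, hj0⟩))
    · -- count of elements ≤ m
      rw [List.countP_append, countP_ofFn', countP_ofFn']
      have e1 : (Finset.univ.filter fun i : Fin a =>
          decide (emb (if (i : ℕ) < G then x else y) ≤ m)) =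
          Finset.univ.filter (fun i : Fin a => (i : ℕ) < G) := by
        apply Finset.filter_congr; intro i _
        by_cases h : (i : ℕ) < G <;> simp [h, hxm, hym]
      have e2 : (Finset.univ.filter fun j : Fin (a+1) => decide (γ j ≤ m)) = Sᶜ := by
        rw [hS, Finset.compl_filter]; apply Finset.filter_congr; intro j _; simp
      rw [e1, e2, card_filter_lt_fin a G hGa, Finset.card_compl]
      simp only [List.length_append, List.length_ofFn, Fintype.card_fin]
      omega
    · -- count of elements ≥ m
      rw [List.countP_append, countP_ofFn', countP_ofFn']
      have e1 : (Finset.univ.filter fun i : Fin a =>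
          decide (m ≤ emb (if (i : ℕ) < G then x else y))) =
          (Finset.univ.filter (fun i : Fin a => (i : ℕ) < G))ᶜ := by
        rw [Finset.compl_filter]; apply Finset.filter_congr; intro i _
        by_cases h : (i : ℕ) < G <;> simp [h, hmx, hmy]
      have e2 : S ∪ {j0} ⊆ Finset.univ.filter fun j : Fin (a+1) => decide (m ≤ γ j) := by
        intro j hj
        rcases Finset.mem_union.mp hj with h | h
        · simp only [hS, Finset.mem_filter] at h
          exact Finset.mem_filter.mpr ⟨Finset.mem_univ j, by simpa using (not_le.mp h.2).le⟩
        · rw [Finset.mem_singleton.mp h]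
          exact Finset.mem_filter.mpr ⟨Finset.mem_univ j0, by simp [hj0]⟩
      have hcard : G + 1 ≤ (Finset.univ.filter fun j : Fin (a+1) => decide (m ≤ γ j)).card := by
        have := Finset.card_le_card e2
        rwa [Finset.card_union_of_disjoint (by simpa using hj0S), Finset.card_singleton] at this
      rw [e1, Finset.card_compl, card_filter_lt_fin a G hGa]
      simp only [List.length_append, List.length_ofFn, Fintype.card_fin]
      omega
end

section
/- If a generalized median voter function ω is defined from a left coalition system L on r_ω with two consecutive elements x ∈ Ω and (x,y) ∈ Ω²_C (x <* (x,y)) satisfying L(x) = L(x,y), then ω never outputs the pair (x,y): for all peak vectors p ∈ Ω^a, ω(p) ≠ (x,y). -/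
/-- If `x ∈ Ω` and the contiguous pair `(x, y)` have the same winning
coalitions, `L(x) = L(x,y)`, then the generalized median voter function never
outputs the pair `(x, y)`: the pair is never the `≤*`-least element of `r_ω`
whose set of supporting peaks is winning. -/
theorem stmt14 (Ω : Finset ℝ) (a : ℕ) (rω : Set V)
    (L : V → Set (Finset (Fin a)))
    (hmono : ∀ (α β : V) (S : Finset (Fin a)), α ≤ β → S ∈ L α → S ∈ L β)
    (hsuper : ∀ (α : V) (S S' : Finset (Fin a)), S ∈ L α → S ⊆ S' → S' ∈ L α)
    (x y : ℝ) (hxy : IsContigPair Ω x y)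
    (hx : emb x ∈ rω) (hpr : pairV x y ∈ rω)
    (hL : L (emb x) = L (pairV x y))
    (p : Fin a → ℝ) (hp : ∀ i, p i ∈ Ω) :
    ¬(((Finset.univ.filter fun i => emb (p i) ≤ pairV x y) ∈ L (pairV x y)) ∧
      ∀ β ∈ rω, β < pairV x y →
        (Finset.univ.filter fun i => emb (p i) ≤ β) ∉ L β) := by
  rintro ⟨h1, h2⟩
  obtain ⟨-, -, hxlty, -⟩ := hxy
  have hlt : emb x < pairV x y := by
    simp [emb, pairV, Prod.Lex.lt_iff, hxlty]
  have hset : (Finset.univ.filter fun i => emb (p i) ≤ pairV x y)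
      = (Finset.univ.filter fun i => emb (p i) ≤ emb x) := by
    apply Finset.filter_congr
    intro i _
    have : (emb (p i) ≤ pairV x y) ↔ (p i ≤ x) := by
      simp only [emb, pairV, Prod.Lex.le_iff]
      constructor
      · rintro (h | ⟨h, -⟩); exacts [le_of_lt h, le_of_eq h]
      · intro h
        rcases lt_or_eq_of_le h with h' | h'
        · exact Or.inl h'
        · exact Or.inr ⟨h', le_of_lt (h' ▸ hxlty)⟩
    have h2' : (emb (p i) ≤ emb x) ↔ (p i ≤ x) := by
      simp only [emb, Prod.Lex.le_iff, Prod.Lex.lt_iff, toLex_inj, Prod.mk.injEq,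
        and_self, le_iff_lt_or_eq]
      tauto
    simp [this, h2']
  exact h2 (emb x) hx hlt (hL ▸ (hset ▸ h1))
end
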